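/- Let X_t be a simple random walk on a finite connected graph on n vertices, and T_{n/2^x} the first time at most n/2^x vertices remain unvisited. Then E[T_{n/2^x}] ≤ 4(x+1)·t_hit, where t_hit is the maximal expected hitting time. -/

import Mathlib

open scoped ENNReal
open Finset

/-- The probability that a simple random walk on `G` started at `u` avoids `v` during its
first `t` steps. -/
noncomputable def srwAvoid {V : Type*} [Fintype V] [DecidableEq V]
    (G : SimpleGraph V) [DecidableRel G.Adj] (u v : V) (t : ℕ) : ℝ≥0∞ :=
  ∑ tr ∈ Finset.univ.filter (fun tr : Fin (t + 1) → V =>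
      tr 0 = u ∧ (∀ i : Fin t, G.Adj (tr i.castSucc) (tr i.succ)) ∧ ∀ i, tr i ≠ v),
    ∏ i : Fin t, ((G.degree (tr i.castSucc) : ℝ≥0∞))⁻¹

/-- The expected hitting time of `v` from `u` for the simple random walk on `G`. -/
noncomputable def srwHit {V : Type*} [Fintype V] [DecidableEq V]
    (G : SimpleGraph V) [DecidableRel G.Adj] (u v : V) : ℝ≥0∞ :=
  ∑' t : ℕ, srwAvoid G u v t

/-- The maximal expected hitting time `t_hit = max_{u,v} E_u[τ_v]`. -/
noncomputable def srwMaxHit {V : Type*} [Fintype V] [DecidableEq V]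
    (G : SimpleGraph V) [DecidableRel G.Adj] : ℝ≥0∞ :=
  ⨆ u, ⨆ v, srwHit G u v

/-- The probability that after `t` steps of the simple random walk from `u`, strictly more
than `n / 2^x` vertices remain unvisited (i.e. `(number unvisited) · 2^x > n`). -/
noncomputable def srwManyUnvisited {V : Type*} [Fintype V] [DecidableEq V]
    (G : SimpleGraph V) [DecidableRel G.Adj] (u : V) (x t : ℕ) : ℝ≥0∞ :=
  ∑ tr ∈ Finset.univ.filter (fun tr : Fin (t + 1) → V =>
      tr 0 = u ∧ (∀ i : Fin t, G.Adj (tr i.castSucc) (tr i.succ)) ∧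
        Fintype.card V <
          (Finset.univ.filter (fun v : V => ∀ i, tr i ≠ v)).card * 2 ^ x),
    ∏ i : Fin t, ((G.degree (tr i.castSucc) : ℝ≥0∞))⁻¹

namespace SRWProof

variable {V : Type*} [Fintype V] [DecidableEq V] (G : SimpleGraph V) [DecidableRel G.Adj]

/-- weight of a trajectory -/
noncomputable def wgt {t : ℕ} (tr : Fin (t + 1) → V) : ℝ≥0∞ :=
  ∏ i : Fin t, ((G.degree (tr i.castSucc) : ℝ≥0∞))⁻¹

/-- a valid trajectory from `u` -/
def valid {t : ℕ} (u : V) (tr : Fin (t + 1) → V) : Prop :=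
  tr 0 = u ∧ ∀ i : Fin t, G.Adj (tr i.castSucc) (tr i.succ)

/-- canonical filtered trajectory set -/
noncomputable def F (u : V) (t : ℕ) (P : (Fin (t + 1) → V) → Prop) :
    Finset (Fin (t + 1) → V) :=
  @Finset.filter _ (fun tr => valid G u tr ∧ P tr)
    (fun tr => Classical.propDecidable _) Finset.univ

noncomputable def S (u : V) (t : ℕ) (P : (Fin (t + 1) → V) → Prop) : ℝ≥0∞ :=
  ∑ tr ∈ F G u t P, wgt G tr

lemma mem_F {u : V} {t : ℕ} {P : (Fin (t + 1) → V) → Prop} {tr : Fin (t + 1) → V} :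
    tr ∈ F G u t P ↔ valid G u tr ∧ P tr := by
  unfold F
  simp only [Finset.mem_filter, Finset.mem_univ, true_and]

variable {G}

set_option linter.unusedSectionVars false
set_option linter.unreachableTactic false
set_option linter.unnecessarySeqFocus false
set_option linter.unusedTactic false

lemma appc {n : ℕ} (tr : Fin n → V) {j j' : Fin n} (h : (j : ℕ) = (j' : ℕ)) :
    tr j = tr j' := congrArg tr (Fin.ext h)

/-- prefix of a trajectory -/
def pre (s t : ℕ) (tr : Fin (s + t + 1) → V) : Fin (s + 1) → V :=
  fun i => tr ⟨i.1, by have := i.2; omega⟩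

/-- suffix of a trajectory -/
def suf (s t : ℕ) (tr : Fin (s + t + 1) → V) : Fin (t + 1) → V :=
  fun j => tr ⟨s + j.1, by have := j.2; omega⟩

/-- gluing two trajectories -/
def glue {s t : ℕ} (tr1 : Fin (s + 1) → V) (tr2 : Fin (t + 1) → V) :
    Fin (s + t + 1) → V :=
  fun k => if h : (k : ℕ) < s + 1 then tr1 ⟨k, h⟩ else tr2 ⟨(k : ℕ) - s, by have := k.2; omega⟩

lemma pre_apply (s t : ℕ) (tr : Fin (s + t + 1) → V) (i : Fin (s + 1)) :
    pre s t tr i = tr ⟨i.1, by have := i.2; omega⟩ := rfl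

lemma suf_apply (s t : ℕ) (tr : Fin (s + t + 1) → V) (j : Fin (t + 1)) :
    suf s t tr j = tr ⟨s + j.1, by have := j.2; omega⟩ := rfl

lemma pre_glue {s t : ℕ} (tr1 : Fin (s + 1) → V) (tr2 : Fin (t + 1) → V) :
    pre s t (glue tr1 tr2) = tr1 := by
  funext i
  simp only [pre, glue, i.2, dif_pos]

lemma suf_glue {s t : ℕ} (tr1 : Fin (s + 1) → V) (tr2 : Fin (t + 1) → V)
    (h : tr2 0 = tr1 (Fin.last s)) :
    suf s t (glue tr1 tr2) = tr2 := by
  funext j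
  simp only [suf, glue]
  rcases Nat.eq_zero_or_pos j.1 with hj | hj
  · rw [dif_pos (by show s + j.1 < s + 1; omega)]
    have hj0 : j = 0 := Fin.ext (by simpa using hj)
    subst hj0
    rw [h]
    exact appc tr1 (by simp [Fin.last])
  · rw [dif_neg (by show ¬ (s + j.1 < s + 1); omega)]
    exact appc tr2 (by simp <;> omega)

lemma glue_pre_suf {s t : ℕ} (tr : Fin (s + t + 1) → V) :
    glue (pre s t tr) (suf s t tr) = tr := by
  funext k
  simp only [glue, pre, suf]
  split_ifs with h
  · exact appc tr rfl
  · exact appc tr (by simp <;> omega)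

lemma valid_pre {s t : ℕ} {u : V} {tr : Fin (s + t + 1) → V} (h : valid G u tr) :
    valid G u (pre s t tr) := by
  obtain ⟨h0, hadj⟩ := h
  constructor
  · rw [pre_apply]
    rw [← h0]
    exact appc tr rfl
  · intro i
    rw [pre_apply, pre_apply]
    have := hadj ⟨i.1, by have := i.2; omega⟩
    convert this using 2 <;> exact Fin.ext (by simp <;> omega)

lemma valid_suf {s t : ℕ} {u : V} {tr : Fin (s + t + 1) → V} (h : valid G u tr) :
    valid G (pre s t tr (Fin.last s)) (suf s t tr) := by
  obtain ⟨h0, hadj⟩ := h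
  constructor
  · rw [pre_apply, suf_apply]
    exact appc tr (by simp [Fin.last])
  · intro i
    rw [suf_apply, suf_apply]
    have := hadj ⟨s + i.1, by have := i.2; omega⟩
    convert this using 2 <;> exact Fin.ext (by simp <;> omega)

lemma valid_glue {s t : ℕ} {u : V} {tr1 : Fin (s + 1) → V} {tr2 : Fin (t + 1) → V}
    (h1 : valid G u tr1) (h2 : valid G (tr1 (Fin.last s)) tr2) :
    valid G u (glue tr1 tr2) := by
  obtain ⟨h10, h1adj⟩ := h1
  obtain ⟨h20, h2adj⟩ := h2
  constructor
  · show (if h : _ then _ else _) = u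
    rw [dif_pos (by simp)]
    rw [← h10]; exact appc tr1 rfl
  · intro i
    by_cases hlt : (i : ℕ) + 1 < s + 1
    · have := h1adj ⟨i.1, by omega⟩
      have e1 : glue tr1 tr2 i.castSucc = tr1 ⟨i.1, by omega⟩ := by
        show (if h : _ then _ else _) = _
        rw [dif_pos (by simp <;> omega)]
        exact appc tr1 rfl
      have e2 : glue tr1 tr2 i.succ = tr1 ⟨i.1 + 1, by omega⟩ := by
        show (if h : _ then _ else _) = _
        rw [dif_pos (by simp <;> omega)]
        exact appc tr1 rfl
      rw [e1, e2]
      convert this using 2 <;> exact Fin.ext (by simp <;> omega)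
    · by_cases heq : (i : ℕ) = s
      · have hts : 0 < t := by have := i.2; omega
        have := h2adj ⟨0, hts⟩
        rw [show tr2 (⟨0, hts⟩ : Fin t).castSucc = tr2 0 from appc tr2 rfl, h20] at this
        have e1 : glue tr1 tr2 i.castSucc = tr1 (Fin.last s) := by
          show (if h : _ then _ else _) = _
          rw [dif_pos (by simp <;> omega)]
          exact appc tr1 (by simp [Fin.last] <;> omega)
        have e2 : glue tr1 tr2 i.succ = tr2 (⟨0, hts⟩ : Fin t).succ := by
          show (if h : _ then _ else _) = _
          rw [dif_neg (by simp <;> omega)]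
          exact appc tr2 (by simp <;> omega)
        rw [e1, e2]
        exact this
      · have hgt : s < (i : ℕ) := by omega
        have hi2 := i.2
        have := h2adj ⟨i.1 - s, by omega⟩
        have e1 : glue tr1 tr2 i.castSucc = tr2 ⟨i.1 - s, by omega⟩ := by
          show (if h : _ then _ else _) = _
          rw [dif_neg (by simp <;> omega)]
          exact appc tr2 (by simp <;> omega)
        have e2 : glue tr1 tr2 i.succ = tr2 ⟨i.1 - s + 1, by omega⟩ := by
          show (if h : _ then _ else _) = _
          rw [dif_neg (by simp <;> omega)]
          exact appc tr2 (by simp <;> omega)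
        rw [e1, e2]
        convert this using 2 <;> exact Fin.ext (by simp <;> omega)

lemma wgt_split {s t : ℕ} (tr : Fin (s + t + 1) → V) :
    wgt G tr = wgt G (pre s t tr) * wgt G (suf s t tr) := by
  unfold wgt
  rw [Fin.prod_univ_add (fun i : Fin (s + t) => ((G.degree (tr i.castSucc) : ℝ≥0∞))⁻¹)]
  rfl

attribute [local instance] Classical.propDecidable

lemma S_congr {u : V} {t : ℕ} {P Q : (Fin (t + 1) → V) → Prop}
    (h : ∀ tr, P tr ↔ Q tr) : S G u t P = S G u t Q := by
  unfold S
  refine Finset.sum_congr ?_ (fun _ _ => rfl)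
  ext tr
  rw [mem_F, mem_F]
  exact and_congr_right (fun _ => h tr)

lemma S_split (u : V) (s t : ℕ) (Ps : (Fin (s + 1) → V) → Prop)
    (Pt : (Fin (t + 1) → V) → Prop) :
    S G u (s + t) (fun tr => Ps (pre s t tr) ∧ Pt (suf s t tr)) =
      ∑ tr1 ∈ F G u s Ps, wgt G tr1 * S G (tr1 (Fin.last s)) t Pt := by
  calc S G u (s + t) (fun tr => Ps (pre s t tr) ∧ Pt (suf s t tr))
      = ∑ p ∈ (F G u s Ps).sigma (fun tr1 => F G (tr1 (Fin.last s)) t Pt),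
          wgt G p.1 * wgt G p.2 := by
        unfold S
        refine Finset.sum_nbij' (fun tr => ⟨pre s t tr, suf s t tr⟩)
          (fun p => glue p.1 p.2) ?_ ?_ ?_ ?_ ?_
        · intro tr htr
          rw [mem_F] at htr
          obtain ⟨hv, hPs, hPt⟩ := htr
          simp only [Finset.mem_sigma, mem_F]
          exact ⟨⟨valid_pre hv, hPs⟩, valid_suf hv, hPt⟩
        · intro p hp
          simp only [Finset.mem_sigma, mem_F] at hp
          obtain ⟨⟨hv1, hPs⟩, hv2, hPt⟩ := hp
          rw [mem_F]
          refine ⟨valid_glue hv1 hv2, ?_, ?_⟩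
          · rw [pre_glue]; exact hPs
          · rw [suf_glue _ _ hv2.1]; exact hPt
        · intro tr _; exact glue_pre_suf tr
        · intro p hp
          simp only [Finset.mem_sigma, mem_F] at hp
          obtain ⟨⟨hv1, _⟩, hv2, _⟩ := hp
          obtain ⟨p1, p2⟩ := p
          exact Sigma.ext (pre_glue p1 p2) (heq_of_eq (suf_glue p1 p2 hv2.1))
        · intro tr _; exact wgt_split tr
    _ = ∑ tr1 ∈ F G u s Ps, ∑ tr2 ∈ F G (tr1 (Fin.last s)) t Pt,
          wgt G tr1 * wgt G tr2 := by
        rw [Finset.sum_sigma]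
    _ = _ := Finset.sum_congr rfl (fun tr1 _ => by rw [← Finset.mul_sum]; rfl)

lemma S_mono_pred {u : V} {t : ℕ} {P Q : (Fin (t + 1) → V) → Prop}
    (h : ∀ tr, valid G u tr → P tr → Q tr) : S G u t P ≤ S G u t Q := by
  unfold S
  refine Finset.sum_le_sum_of_subset ?_
  intro tr htr
  rw [mem_F] at htr ⊢
  exact ⟨htr.1, h tr htr.1 htr.2⟩

lemma S_le (u : V) (s t : ℕ) (Pst : (Fin (s + t + 1) → V) → Prop)
    (Ps : (Fin (s + 1) → V) → Prop) (Pt : (Fin (t + 1) → V) → Prop) (B : ℝ≥0∞)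
    (hsplit : ∀ tr : Fin (s + t + 1) → V, valid G u tr → Pst tr →
      Ps (pre s t tr) ∧ Pt (suf s t tr))
    (hB : ∀ w : V, S G w t Pt ≤ B) :
    S G u (s + t) Pst ≤ S G u s Ps * B := by
  calc S G u (s + t) Pst
      ≤ S G u (s + t) (fun tr => Ps (pre s t tr) ∧ Pt (suf s t tr)) := S_mono_pred hsplit
    _ = ∑ tr1 ∈ F G u s Ps, wgt G tr1 * S G (tr1 (Fin.last s)) t Pt := S_split u s t Ps Pt
    _ ≤ ∑ tr1 ∈ F G u s Ps, wgt G tr1 * B :=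
        Finset.sum_le_sum (fun tr1 _ => mul_le_mul_right (hB _) _)
    _ = S G u s Ps * B := by rw [← Finset.sum_mul]; rfl

lemma S_true_zero (u : V) : S G u 0 (fun _ => True) = 1 := by
  unfold S
  have hset : F G u 0 (fun _ => True) = {(fun _ => u : Fin 1 → V)} := by
    ext tr
    rw [mem_F]
    simp only [and_true, Finset.mem_singleton, valid]
    constructor
    · rintro ⟨h0, -⟩
      funext i
      rw [show i = 0 from Fin.ext (by have := i.2; simp <;> omega)]
      exact h0
    · rintro rfl
      exact ⟨rfl, fun i => i.elim0⟩
  rw [hset]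
  simp [wgt]

lemma S_one (hdeg : ∀ v : V, 0 < G.degree v) (w : V) :
    S G w 1 (fun _ => True) = 1 := by
  unfold S
  have key : (∑ tr ∈ F G w 1 (fun _ => True), wgt G tr)
      = ∑ _z ∈ G.neighborFinset w, ((G.degree w : ℝ≥0∞))⁻¹ := by
    refine Finset.sum_nbij' (fun tr => tr 1) (fun z => fun k : Fin 2 => if k = 0 then w else z)
      ?_ ?_ ?_ ?_ ?_
    · intro tr htr
      rw [mem_F] at htr
      obtain ⟨⟨h0, hadj⟩, -⟩ := htr
      have h := hadj 0
      rw [SimpleGraph.mem_neighborFinset]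
      rw [show ((0 : Fin 1).castSucc) = (0 : Fin 2) from rfl] at h
      rw [show ((0 : Fin 1).succ) = (1 : Fin 2) from rfl] at h
      rwa [h0] at h
    · intro z hz
      rw [SimpleGraph.mem_neighborFinset] at hz
      rw [mem_F]
      refine ⟨⟨by simp, ?_⟩, trivial⟩
      intro i
      rw [Subsingleton.elim i 0]
      rw [show ((0 : Fin 1).castSucc) = (0 : Fin 2) from rfl,
        show ((0 : Fin 1).succ) = (1 : Fin 2) from rfl]
      simpa using hz
    · intro tr htr
      rw [mem_F] at htr
      funext k
      fin_cases k
      · simpa using htr.1.1.symm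
      · simp
    · intro z _
      simp
    · intro tr htr
      rw [mem_F] at htr
      unfold wgt
      rw [Fin.prod_univ_one]
      rw [show ((0 : Fin 1).castSucc) = (0 : Fin 2) from rfl, htr.1.1]
  rw [key, Finset.sum_const, SimpleGraph.card_neighborFinset_eq_degree, nsmul_eq_mul]
  exact ENNReal.mul_inv_cancel (by exact_mod_cast (hdeg w).ne') (ENNReal.natCast_ne_top _)

lemma S_true (hdeg : ∀ v : V, 0 < G.degree v) (t : ℕ) (u : V) :
    S G u t (fun _ => True) = 1 := by
  induction t generalizing u with
  | zero => exact S_true_zero u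
  | succ t ih =>
    have h1 : S G u (t + 1) (fun _ => True)
        = S G u (t + 1) (fun tr => (fun _ => True) (pre t 1 tr) ∧ (fun _ => True) (suf t 1 tr)) :=
      S_congr (fun tr => by simp)
    rw [h1, S_split u t 1 (fun _ => True) (fun _ => True)]
    calc (∑ tr1 ∈ F G u t (fun _ => True), wgt G tr1 * S G (tr1 (Fin.last t)) 1 (fun _ => True))
        = ∑ tr1 ∈ F G u t (fun _ => True), wgt G tr1 :=
          Finset.sum_congr rfl (fun tr1 _ => by rw [S_one hdeg, mul_one])
      _ = S G u t (fun _ => True) := rfl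
      _ = 1 := ih u

lemma S_le_one (hdeg : ∀ v : V, 0 < G.degree v) {t : ℕ} {u : V}
    {P : (Fin (t + 1) → V) → Prop} : S G u t P ≤ 1 := by
  calc S G u t P ≤ S G u t (fun _ => True) := S_mono_pred (fun _ _ _ => trivial)
    _ = 1 := S_true hdeg t u

def avoidP (v : V) {t : ℕ} (tr : Fin (t + 1) → V) : Prop := ∀ i, tr i ≠ v

lemma srwAvoid_eq (u v : V) (t : ℕ) : srwAvoid G u v t = S G u t (avoidP v) := by
  unfold srwAvoid S
  refine Finset.sum_congr ?_ (fun _ _ => rfl)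
  ext tr
  simp only [Finset.mem_filter, Finset.mem_univ, true_and, mem_F, valid, avoidP, and_assoc]

lemma avoid_anti (hdeg : ∀ v : V, 0 < G.degree v) (u v : V) {j t : ℕ} (hjt : j ≤ t) :
    S G u t (avoidP v) ≤ S G u j (avoidP v) := by
  obtain ⟨r, rfl⟩ := Nat.exists_eq_add_of_le hjt
  have h := S_le u j r (avoidP v) (avoidP v) (fun _ => True) 1
    (fun tr _ htr => ⟨fun i => by rw [pre_apply]; exact htr _, trivial⟩)
    (fun w => S_le_one hdeg)
  simpa using h

lemma hit_bound (hdeg : ∀ v : V, 0 < G.degree v) (u v : V) (t : ℕ) :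
    ((t : ℝ≥0∞) + 1) * S G u t (avoidP v) ≤ srwHit G u v := by
  have h1 : ∑ j ∈ Finset.range (t + 1), srwAvoid G u v j ≤ srwHit G u v :=
    ENNReal.sum_le_tsum _
  refine le_trans ?_ h1
  have h2 : ∀ j ∈ Finset.range (t + 1), S G u t (avoidP v) ≤ srwAvoid G u v j := by
    intro j hj
    rw [srwAvoid_eq]
    exact avoid_anti hdeg u v (Nat.lt_succ_iff.mp (Finset.mem_range.mp hj))
  calc ((t : ℝ≥0∞) + 1) * S G u t (avoidP v)
      = ∑ _j ∈ Finset.range (t + 1), S G u t (avoidP v) := by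
        rw [Finset.sum_const, Finset.card_range, nsmul_eq_mul]
        push_cast
        ring
    _ ≤ _ := Finset.sum_le_sum h2

def manyP (x : ℕ) {t : ℕ} (tr : Fin (t + 1) → V) : Prop :=
  Fintype.card V < (Finset.univ.filter (fun v : V => ∀ i, tr i ≠ v)).card * 2 ^ x

lemma srwManyUnvisited_eq (u : V) (x t : ℕ) :
    srwManyUnvisited G u x t = S G u t (manyP x) := by
  unfold srwManyUnvisited S
  refine Finset.sum_congr ?_ (fun _ _ => rfl)
  ext tr
  simp only [Finset.mem_filter, Finset.mem_univ, true_and, mem_F, valid, manyP, and_assoc,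
    Finset.filter_congr_decidable]

lemma manyP_split {x s t : ℕ} (tr : Fin (s + t + 1) → V) (h : manyP x tr) :
    manyP x (pre s t tr) ∧ manyP x (suf s t tr) := by
  unfold manyP at *
  constructor <;>
    refine lt_of_lt_of_le h (mul_le_mul_left (Finset.card_le_card ?_) _) <;>
  · intro v hv
    simp only [Finset.mem_filter, Finset.mem_univ, true_and] at hv ⊢
    intro i
    first
      | (rw [pre_apply]; exact hv _)
      | (rw [suf_apply]; exact hv _)

lemma many_markov (u : V) (x t : ℕ) :
    (Fintype.card V : ℝ≥0∞) * S G u t (manyP x) ≤ 2 ^ x * ∑ v : V, S G u t (avoidP v) := by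
  have hcard : ∀ tr : Fin (t + 1) → V,
      (((Finset.univ.filter (fun v : V => ∀ i, tr i ≠ v)).card : ℕ) : ℝ≥0∞)
        = ∑ v : V, if (∀ i, tr i ≠ v) then (1 : ℝ≥0∞) else 0 := by
    intro tr
    rw [Finset.card_filter]
    push_cast
    rfl
  have key : (∑ tr ∈ F G u t (fun _ => True),
        ((Finset.univ.filter (fun v : V => ∀ i, tr i ≠ v)).card : ℝ≥0∞) * wgt G tr)
      = ∑ v : V, S G u t (avoidP v) := by
    have h1 : ∀ tr ∈ F G u t (fun _ => True),
        ((Finset.univ.filter (fun v : V => ∀ i, tr i ≠ v)).card : ℝ≥0∞) * wgt G tr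
        = ∑ v : V, (if (∀ i, tr i ≠ v) then wgt G tr else 0) := by
      intro tr _
      rw [hcard, Finset.sum_mul]
      exact Finset.sum_congr rfl (fun v _ => by rw [ite_mul, one_mul, zero_mul])
    rw [Finset.sum_congr rfl h1, Finset.sum_comm]
    refine Finset.sum_congr rfl ?_
    intro v _
    have hset : (F G u t (fun _ => True)).filter (fun tr => ∀ i, tr i ≠ v)
        = F G u t (avoidP v) := by
      ext tr
      simp only [Finset.mem_filter, mem_F, avoidP, and_true]
    rw [← Finset.sum_filter, hset]
    rfl
  have hsub : F G u t (manyP x) ⊆ F G u t (fun _ => True) := by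
    intro tr htr
    rw [mem_F] at htr ⊢
    exact ⟨htr.1, trivial⟩
  calc (Fintype.card V : ℝ≥0∞) * S G u t (manyP x)
      = ∑ tr ∈ F G u t (manyP x), (Fintype.card V : ℝ≥0∞) * wgt G tr := by
        rw [S, Finset.mul_sum]
    _ ≤ ∑ tr ∈ F G u t (manyP x),
          (((Finset.univ.filter (fun v : V => ∀ i, tr i ≠ v)).card : ℝ≥0∞) * 2 ^ x)
            * wgt G tr := by
        refine Finset.sum_le_sum ?_
        intro tr htr
        refine mul_le_mul_left ?_ _
        rw [mem_F] at htr
        have hm := htr.2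
        unfold manyP at hm
        calc (Fintype.card V : ℝ≥0∞)
            ≤ (((Finset.univ.filter (fun v : V => ∀ i, tr i ≠ v)).card * 2 ^ x : ℕ) : ℝ≥0∞) := by
              exact_mod_cast hm.le
          _ = _ := by push_cast; ring
    _ ≤ ∑ tr ∈ F G u t (fun _ => True),
          (((Finset.univ.filter (fun v : V => ∀ i, tr i ≠ v)).card : ℝ≥0∞) * 2 ^ x)
            * wgt G tr := Finset.sum_le_sum_of_subset hsub
    _ = 2 ^ x * ∑ tr ∈ F G u t (fun _ => True),
          ((Finset.univ.filter (fun v : V => ∀ i, tr i ≠ v)).card : ℝ≥0∞) * wgt G tr := by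
        rw [Finset.mul_sum]
        exact Finset.sum_congr rfl (fun tr _ => by ring)
    _ = 2 ^ x * ∑ v : V, S G u t (avoidP v) := by rw [key]

lemma S_avoid_zero {u v : V} (huv : u ≠ v) : S G u 0 (avoidP v) = 1 := by
  unfold S
  have hset : F G u 0 (avoidP v) = {(fun _ => u : Fin 1 → V)} := by
    ext tr
    rw [mem_F]
    simp only [Finset.mem_singleton, valid, avoidP]
    constructor
    · rintro ⟨⟨h0, -⟩, -⟩
      funext i
      rw [show i = 0 from Fin.ext (by have := i.2; simp <;> omega)]
      exact h0
    · rintro rfl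
      exact ⟨⟨rfl, fun i => i.elim0⟩, fun _ => huv⟩
  rw [hset]
  simp [wgt]

lemma avoid_pow (hdeg : ∀ v : V, 0 < G.degree v) {k : ℕ}
    (hk : ∀ w v : V, S G w k (avoidP v) ≤ 2⁻¹) (a : ℕ) (w v : V) :
    S G w (a * k) (avoidP v) ≤ 2⁻¹ ^ a := by
  induction a generalizing w with
  | zero => simpa using S_le_one hdeg
  | succ a ih =>
    rw [show (a + 1) * k = a * k + k from by ring]
    calc S G w (a * k + k) (avoidP v)
        ≤ S G w (a * k) (avoidP v) * 2⁻¹ :=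
          S_le w (a * k) k (avoidP v) (avoidP v) (avoidP v) 2⁻¹
            (fun tr _ htr => ⟨fun i => by rw [pre_apply]; exact htr _,
              fun i => by rw [suf_apply]; exact htr _⟩)
            (fun w' => hk w' v)
      _ ≤ 2⁻¹ ^ a * 2⁻¹ := mul_le_mul_left (ih w) _
      _ = 2⁻¹ ^ (a + 1) := (pow_succ _ _).symm

lemma many_pow (hdeg : ∀ v : V, 0 < G.degree v) (hcard1 : 0 < Fintype.card V) {x k : ℕ}
    (hk : ∀ w v : V, S G w k (avoidP v) ≤ 2⁻¹) (a : ℕ) (w : V) :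
    S G w (a * ((x + 1) * k)) (manyP x) ≤ 2⁻¹ ^ a := by
  have hn0 : (Fintype.card V : ℝ≥0∞) ≠ 0 := Nat.cast_ne_zero.mpr (by omega)
  have hnt : (Fintype.card V : ℝ≥0∞) ≠ ⊤ := ENNReal.natCast_ne_top _
  have hblock : ∀ w' : V, S G w' ((x + 1) * k) (manyP x) ≤ 2⁻¹ := by
    intro w'
    have h1 := many_markov (G := G) w' x ((x + 1) * k)
    have h2 : (∑ v : V, S G w' ((x + 1) * k) (avoidP v))
        ≤ (Fintype.card V : ℝ≥0∞) * 2⁻¹ ^ (x + 1) := by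
      calc (∑ v : V, S G w' ((x + 1) * k) (avoidP v))
          ≤ ∑ _v : V, (2⁻¹ : ℝ≥0∞) ^ (x + 1) :=
            Finset.sum_le_sum (fun v _ => avoid_pow hdeg hk (x + 1) w' v)
        _ = (Fintype.card V : ℝ≥0∞) * 2⁻¹ ^ (x + 1) := by
            rw [Finset.sum_const, nsmul_eq_mul, Finset.card_univ]
    have h2inv : (2 : ℝ≥0∞) * 2⁻¹ = 1 := ENNReal.mul_inv_cancel (by norm_num) (by norm_num)
    have h3 : (2 : ℝ≥0∞) ^ x * ((Fintype.card V : ℝ≥0∞) * 2⁻¹ ^ (x + 1))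
        = (Fintype.card V : ℝ≥0∞) * 2⁻¹ := by
      calc (2 : ℝ≥0∞) ^ x * ((Fintype.card V : ℝ≥0∞) * 2⁻¹ ^ (x + 1))
          = (Fintype.card V : ℝ≥0∞) * (((2 : ℝ≥0∞) * 2⁻¹) ^ x * 2⁻¹) := by
            rw [mul_pow, pow_succ]; ring
        _ = (Fintype.card V : ℝ≥0∞) * 2⁻¹ := by rw [h2inv, one_pow, one_mul]
    have h4 : (Fintype.card V : ℝ≥0∞) * S G w' ((x + 1) * k) (manyP x)
        ≤ (Fintype.card V : ℝ≥0∞) * 2⁻¹ :=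
      le_trans h1 (le_trans (mul_le_mul_right h2 _) (le_of_eq h3))
    exact (ENNReal.mul_le_mul_iff_right hn0 hnt).mp h4
  induction a generalizing w with
  | zero => simpa using S_le_one hdeg
  | succ a ih =>
    rw [show (a + 1) * ((x + 1) * k) = a * ((x + 1) * k) + (x + 1) * k from by ring]
    calc S G w (a * ((x + 1) * k) + (x + 1) * k) (manyP x)
        ≤ S G w (a * ((x + 1) * k)) (manyP x) * 2⁻¹ :=
          S_le w (a * ((x + 1) * k)) ((x + 1) * k) (manyP x) (manyP x) (manyP x) 2⁻¹
            (fun tr _ htr => manyP_split tr htr) hblock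
      _ ≤ 2⁻¹ ^ a * 2⁻¹ := mul_le_mul_left (ih w) _
      _ = 2⁻¹ ^ (a + 1) := (pow_succ _ _).symm

lemma many_anti (hdeg : ∀ v : V, 0 < G.degree v) (u : V) (x : ℕ) {j t : ℕ} (hjt : j ≤ t) :
    S G u t (manyP x) ≤ S G u j (manyP x) := by
  obtain ⟨r, rfl⟩ := Nat.exists_eq_add_of_le hjt
  have h := S_le u j r (manyP x) (manyP x) (fun _ => True) 1
    (fun tr _ htr => ⟨(manyP_split tr htr).1, trivial⟩) (fun w => S_le_one hdeg)
  simpa using h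

end SRWProof

open SRWProof in
theorem expected_time_to_few_unvisited {V : Type*} [Fintype V] [DecidableEq V]
    (G : SimpleGraph V) [DecidableRel G.Adj] (hconn : G.Connected)
    (u : V) (x : ℕ) :
    (∑' t : ℕ, srwManyUnvisited G u x t) ≤ 4 * (x + 1) * srwMaxHit G := by
  by_cases hcard : Fintype.card V ≤ 1
  · have hz : ∀ t, srwManyUnvisited G u x t = 0 := by
      intro t
      rw [srwManyUnvisited_eq]
      have hF : F G u t (manyP x) = ∅ := by
        ext tr
        rw [mem_F]
        simp only [Finset.notMem_empty, iff_false, not_and]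
        rintro - hm
        unfold manyP at hm
        have hempty : (Finset.univ.filter (fun v : V => ∀ i, tr i ≠ v)) = ∅ := by
          refine Finset.filter_false_of_mem ?_
          intro v _ hv
          have hvu : v = tr 0 := Fintype.card_le_one_iff.mp hcard v (tr 0)
          exact hv 0 hvu.symm
        rw [hempty] at hm
        simp at hm
      show (∑ tr ∈ F G u t (manyP x), wgt G tr) = 0
      rw [hF, Finset.sum_empty]
    rw [tsum_congr hz, tsum_zero]
    exact zero_le'
  · push_neg at hcard
    have hdeg : ∀ v : V, 0 < G.degree v := by
      intro v
      obtain ⟨w, hw⟩ := Fintype.exists_ne_of_one_lt_card hcard v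
      obtain ⟨p⟩ := hconn.preconnected v w
      cases p with
      | nil => exact absurd rfl hw
      | cons h _ => exact (G.degree_pos_iff_exists_adj v).mpr ⟨_, h⟩
    set M := srwMaxHit G with hM
    by_cases hMtop : M = ⊤
    · have htop : 4 * ((x : ℝ≥0∞) + 1) * M = ⊤ := by
        rw [hMtop, ENNReal.mul_top]
        refine mul_ne_zero (by norm_num) ?_
        exact ne_of_gt (lt_of_lt_of_le zero_lt_one le_add_self)
      rw [htop]
      exact le_top
    have hM1 : (1 : ℝ≥0∞) ≤ M := by
      obtain ⟨v, hv⟩ := Fintype.exists_ne_of_one_lt_card hcard u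
      have h0 : srwAvoid G u v 0 = 1 := by
        rw [srwAvoid_eq]
        exact S_avoid_zero (Ne.symm hv)
      calc (1 : ℝ≥0∞) = srwAvoid G u v 0 := h0.symm
        _ ≤ srwHit G u v := ENNReal.le_tsum 0
        _ ≤ ⨆ v', srwHit G u v' := le_iSup (fun v' => srwHit G u v') v
        _ ≤ M := le_iSup (fun u' => ⨆ v', srwHit G u' v') u
    have h2M : (2 : ℝ≥0∞) ≤ 2 * M := by
      calc (2 : ℝ≥0∞) = 2 * 1 := by ring
        _ ≤ 2 * M := mul_le_mul_right hM1 _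
    have h2Mtop : 2 * M ≠ ⊤ := ENNReal.mul_ne_top (by norm_num) hMtop
    set y : ℝ := (2 * M).toReal with hy
    have hy2 : (2 : ℝ) ≤ y := by
      have h := ENNReal.toReal_mono h2Mtop h2M
      calc (2 : ℝ) = ((2 : ℝ≥0∞)).toReal := by simp
        _ ≤ y := h
    set c : ℕ := ⌈y⌉₊ with hc
    have hc2 : 2 ≤ c := by
      have h1 : (1 : ℝ) < y := by linarith
      exact Nat.lt_ceil.mpr (by exact_mod_cast h1)
    set k : ℕ := c - 1 with hk
    have hk1 : 1 ≤ k := by omega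
    have hky : (k : ℝ) ≤ y := by
      have h1 : (c : ℝ) < y + 1 := Nat.ceil_lt_add_one (by linarith)
      have h2 : (k : ℝ) = (c : ℝ) - 1 := by
        rw [hk, Nat.cast_sub (by omega)]
        simp
      linarith
    have hkM : (k : ℝ≥0∞) ≤ 2 * M := by
      rw [← ENNReal.ofReal_toReal h2Mtop, ← hy, ← ENNReal.ofReal_natCast k]
      exact ENNReal.ofReal_le_ofReal hky
    have hMk : 2 * M ≤ (k : ℝ≥0∞) + 1 := by
      have h1 : y ≤ (c : ℝ) := Nat.le_ceil y
      have h2 : ((k + 1 : ℕ) : ℝ) = (c : ℝ) := by exact_mod_cast congrArg (Nat.cast (R := ℝ)) (by omega : k + 1 = c)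
      calc 2 * M = ENNReal.ofReal y := by rw [hy, ENNReal.ofReal_toReal h2Mtop]
        _ ≤ ENNReal.ofReal ((k + 1 : ℕ) : ℝ) := ENNReal.ofReal_le_ofReal (by rw [h2]; exact h1)
        _ = ((k + 1 : ℕ) : ℝ≥0∞) := ENNReal.ofReal_natCast _
        _ = (k : ℝ≥0∞) + 1 := by push_cast; ring
    have havoid : ∀ w v : V, S G w k (avoidP v) ≤ 2⁻¹ := by
      intro w v
      have h1 := hit_bound hdeg w v k
      have h2 : srwHit G w v ≤ M :=
        le_trans (le_iSup (fun v' => srwHit G w v') v)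
          (le_iSup (fun w' => ⨆ v', srwHit G w' v') w)
      have hMhalf : M ≤ ((k : ℝ≥0∞) + 1) * 2⁻¹ := by
        have h4 := mul_le_mul_left hMk 2⁻¹
        calc M = 2 * M * 2⁻¹ := by
              rw [mul_comm (2 : ℝ≥0∞) M, mul_assoc,
                ENNReal.mul_inv_cancel (by norm_num) (by norm_num), mul_one]
          _ ≤ ((k : ℝ≥0∞) + 1) * 2⁻¹ := h4
      have h3 : ((k : ℝ≥0∞) + 1) * S G w k (avoidP v) ≤ ((k : ℝ≥0∞) + 1) * 2⁻¹ :=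
        le_trans h1 (le_trans h2 hMhalf)
      have hne0 : ((k : ℝ≥0∞) + 1) ≠ 0 :=
        ne_of_gt (lt_of_lt_of_le zero_lt_one le_add_self)
      have hnet : ((k : ℝ≥0∞) + 1) ≠ ⊤ :=
        ENNReal.add_ne_top.mpr ⟨ENNReal.natCast_ne_top k, ENNReal.one_ne_top⟩
      exact (ENNReal.mul_le_mul_iff_right hne0 hnet).mp h3
    set L : ℕ := (x + 1) * k with hL
    have hL1 : 0 < L := Nat.mul_pos (Nat.succ_pos x) hk1
    haveI : NeZero L := ⟨by omega⟩
    have hgeo : ∀ t' a : ℕ, a * L ≤ t' → S G u t' (manyP x) ≤ 2⁻¹ ^ a := by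
      intro t' a hat
      obtain ⟨r, rfl⟩ := Nat.exists_eq_add_of_le hat
      calc S G u (a * L + r) (manyP x)
          ≤ S G u (a * L) (manyP x) := many_anti hdeg u x (Nat.le_add_right _ _)
        _ ≤ 2⁻¹ ^ a := by
            rw [hL]
            exact many_pow hdeg (by omega) havoid a u
    calc (∑' t : ℕ, srwManyUnvisited G u x t)
        = ∑' t : ℕ, S G u t (manyP x) := tsum_congr (fun t => srwManyUnvisited_eq u x t)
      _ = ∑' p : ℕ × Fin L, S G u ((Nat.divModEquiv L).symm p) (manyP x) :=
          (Equiv.tsum_eq (Nat.divModEquiv L).symm (fun t => S G u t (manyP x))).symm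
      _ ≤ ∑' p : ℕ × Fin L, 2⁻¹ ^ p.1 :=
          ENNReal.tsum_le_tsum (fun p => hgeo _ p.1 (Nat.le_add_right _ _))
      _ = ∑' a : ℕ, ∑' _r : Fin L, (2⁻¹ : ℝ≥0∞) ^ a := ENNReal.tsum_prod (f := fun a (_ : Fin L) => (2⁻¹ : ℝ≥0∞) ^ a)
      _ = ∑' a : ℕ, (L : ℝ≥0∞) * 2⁻¹ ^ a := by
          refine tsum_congr (fun a => ?_)
          rw [tsum_fintype, Finset.sum_const, Finset.card_univ, Fintype.card_fin, nsmul_eq_mul]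
      _ = (L : ℝ≥0∞) * ∑' a : ℕ, (2⁻¹ : ℝ≥0∞) ^ a := ENNReal.tsum_mul_left
      _ = (L : ℝ≥0∞) * 2 := by
          rw [ENNReal.tsum_geometric, ENNReal.one_sub_inv_two, inv_inv]
      _ ≤ 4 * ((x : ℝ≥0∞) + 1) * M := by
          have hLc : (L : ℝ≥0∞) = ((x : ℝ≥0∞) + 1) * (k : ℝ≥0∞) := by
            rw [hL]
            push_cast
            ring
          calc (L : ℝ≥0∞) * 2 = 2 * ((x : ℝ≥0∞) + 1) * (k : ℝ≥0∞) := by rw [hLc]; ring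
            _ ≤ 2 * ((x : ℝ≥0∞) + 1) * (2 * M) := mul_le_mul_right hkM _
            _ = 4 * ((x : ℝ≥0∞) + 1) * M := by ring
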